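/- Let N ≥ 2, 0 < s < 1, ω ∈ ℝ. Assume the fractional logarithmic Sobolev inequality. Then every u ∈ H^s(ℝᴺ), u ≠ 0, with I_ω(u) = 0 satisfies ‖u‖_{L²}² ≥ (sΓ(N/2)/Γ(N/(2s))) π^{N/2} e^{ω+N}. Consequently d(ω) ≥ ½ (sΓ(N/2)/Γ(N/(2s))) π^{N/2} e^{ω+N} > 0. -/

import Mathlib

open MeasureTheory

/-- `d(ω) ≥ ½ (sΓ(N/2)/Γ(N/(2s))) π^{N/2} e^{ω+N} > 0`, assuming the fractional logarithmic
Sobolev inequality. Here `G f` denotes `‖(−Δ)^{s/2}f‖²_{L²}`, and `d(ω)` is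
`½ inf {‖u‖²_{L²} : u ≠ 0, I_ω(u) = 0}` (computed in `ℝ≥0∞`, so that it is `∞` when the
Nehari manifold is empty). -/
theorem dOmega_lower_bound {N : ℕ} (s ω : ℝ) (hN : 2 ≤ N) (hs0 : 0 < s) (hs1 : s < 1)
    (G : (EuclideanSpace ℝ (Fin N) → ℂ) → ℝ)
    (hLS : ∀ (f : EuclideanSpace ℝ (Fin N) → ℂ) (α : ℝ), 0 < α →
      Integrable (fun x => ‖f x‖ ^ 2) →
      (∫ x, ‖f x‖ ^ 2 * Real.log (‖f x‖ ^ 2 / ∫ y, ‖f y‖ ^ 2)) +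
          ((N : ℝ) + ((N : ℝ) / s) * Real.log α +
            Real.log (s * Real.Gamma ((N : ℝ) / 2) / Real.Gamma ((N : ℝ) / (2 * s)))) *
            ∫ x, ‖f x‖ ^ 2 ≤
        α ^ 2 / Real.pi ^ s * G f) :
    (∀ u : EuclideanSpace ℝ (Fin N) → ℂ,
        Integrable (fun x => ‖u x‖ ^ 2) →
        Integrable (fun x => ‖u x‖ ^ 2 * Real.log (‖u x‖ ^ 2)) →
        0 < ∫ x, ‖u x‖ ^ 2 →
        G u + ω * ∫ x, ‖u x‖ ^ 2 - ∫ x, ‖u x‖ ^ 2 * Real.log (‖u x‖ ^ 2) = 0 →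
        (s * Real.Gamma ((N : ℝ) / 2) / Real.Gamma ((N : ℝ) / (2 * s))) *
            Real.pi ^ ((N : ℝ) / 2) * Real.exp (ω + N) ≤ ∫ x, ‖u x‖ ^ 2) ∧
      ENNReal.ofReal ((1 / 2) *
          ((s * Real.Gamma ((N : ℝ) / 2) / Real.Gamma ((N : ℝ) / (2 * s))) *
            Real.pi ^ ((N : ℝ) / 2) * Real.exp (ω + N))) ≤
        (1 / 2) * sInf {m : ENNReal | ∃ u : EuclideanSpace ℝ (Fin N) → ℂ,
          Integrable (fun x => ‖u x‖ ^ 2) ∧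
          Integrable (fun x => ‖u x‖ ^ 2 * Real.log (‖u x‖ ^ 2)) ∧
          0 < ∫ x, ‖u x‖ ^ 2 ∧
          G u + ω * ∫ x, ‖u x‖ ^ 2 - ∫ x, ‖u x‖ ^ 2 * Real.log (‖u x‖ ^ 2) = 0 ∧
          m = ENNReal.ofReal (∫ x, ‖u x‖ ^ 2)} := by
  have hπ := Real.pi_pos
  have hNpos : (0:ℝ) < N := by
    have : 0 < N := by omega
    exact_mod_cast this
  have hvol : (volume (Set.univ : Set (EuclideanSpace ℝ (Fin N)))) = ⊤ := by
    have h0 : 0 < N := by omega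
    have : Nontrivial (EuclideanSpace ℝ (Fin N)) :=
      ⟨EuclideanSpace.single ⟨0, h0⟩ 1, 0, by
        intro h
        have := congrArg (fun v : EuclideanSpace ℝ (Fin N) => v ⟨0, h0⟩) h
        simp [EuclideanSpace.single_apply] at this⟩
    exact MeasureTheory.measure_univ_of_isAddLeftInvariant volume
  set K : ℝ := s * Real.Gamma ((N : ℝ) / 2) / Real.Gamma ((N : ℝ) / (2 * s)) with hKdef
  have hK : 0 < K :=
    div_pos (mul_pos hs0 (Real.Gamma_pos_of_pos (by positivity)))
      (Real.Gamma_pos_of_pos (by positivity))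
  have main : ∀ u : EuclideanSpace ℝ (Fin N) → ℂ,
      Integrable (fun x => ‖u x‖ ^ 2) →
      Integrable (fun x => ‖u x‖ ^ 2 * Real.log (‖u x‖ ^ 2)) →
      0 < ∫ x, ‖u x‖ ^ 2 →
      G u + ω * ∫ x, ‖u x‖ ^ 2 - ∫ x, ‖u x‖ ^ 2 * Real.log (‖u x‖ ^ 2) = 0 →
      K * Real.pi ^ ((N : ℝ) / 2) * Real.exp (ω + N) ≤ ∫ x, ‖u x‖ ^ 2 := by
    intro u hInt hIntLog hM hNeh
    set M := ∫ x, ‖u x‖ ^ 2 with hMdef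
    set c := ∫ x, ‖u x‖ ^ 2 * Real.log (‖u x‖ ^ 2) with hcdef
    have hsplit : (∫ x, ‖u x‖ ^ 2 * Real.log (‖u x‖ ^ 2 / M)) = c - M * Real.log M := by
      have hpt : ∀ x, ‖u x‖ ^ 2 * Real.log (‖u x‖ ^ 2 / M) =
          ‖u x‖ ^ 2 * Real.log (‖u x‖ ^ 2) - ‖u x‖ ^ 2 * Real.log M := by
        intro x
        rcases eq_or_ne (‖u x‖) 0 with h0 | h0
        · simp [h0]
        · rw [Real.log_div (pow_ne_zero 2 h0) hM.ne', mul_sub]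
      simp_rw [hpt]
      rw [integral_sub hIntLog (hInt.mul_const _), integral_mul_const]
    by_cases hc : c = 0
    · -- the integrand of the Nehari integral is just ‖u x‖^2
      have hNeh' : G u + ω * M = 0 := by
        have e : (∫ x, (‖u x‖ ^ 2 - c)) = M := by
          rw [hc]
          simp only [sub_zero]
          exact hMdef.symm
        rw [e] at hNeh
        exact hNeh
      have hα : (0:ℝ) < Real.pi ^ (s/2) := Real.rpow_pos_of_pos hπ _
      have h := hLS u (Real.pi ^ (s/2)) hα hInt
      have hα2 : (Real.pi ^ (s/2)) ^ 2 / Real.pi ^ s = 1 := by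
        rw [← Real.rpow_natCast (Real.pi ^ (s/2)) 2, ← Real.rpow_mul hπ.le]
        norm_num
        exact ne_of_gt (Real.rpow_pos_of_pos hπ s)
      have hlogα : Real.log (Real.pi ^ (s/2)) = (s/2) * Real.log Real.pi :=
        Real.log_rpow hπ _
      rw [hsplit, hα2, one_mul, hlogα, hc] at h
      have hC : (N:ℝ)/s * ((s/2) * Real.log Real.pi) = Real.log Real.pi * ((N:ℝ)/2) := by
        field_simp
      rw [hC] at h
      have hlogM : (N:ℝ) + Real.log Real.pi * ((N:ℝ)/2) + Real.log K + ω ≤ Real.log M := by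
        have h2 : ((N:ℝ) + Real.log Real.pi * ((N:ℝ)/2) + Real.log K + ω) * M ≤
            Real.log M * M := by nlinarith [h, hNeh']
        exact le_of_mul_le_mul_right h2 hM
      have hBexp : K * Real.pi ^ ((N : ℝ) / 2) * Real.exp (ω + N) =
          Real.exp ((N:ℝ) + Real.log Real.pi * ((N:ℝ)/2) + Real.log K + ω) := by
        simp only [Real.exp_add]
        rw [Real.exp_log hK, ← Real.rpow_def_of_pos hπ]
        ring
      calc K * Real.pi ^ ((N : ℝ) / 2) * Real.exp (ω + N)
          = Real.exp ((N:ℝ) + Real.log Real.pi * ((N:ℝ)/2) + Real.log K + ω) := hBexp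
        _ ≤ Real.exp (Real.log M) := Real.exp_le_exp.mpr hlogM
        _ = M := Real.exp_log hM
    · -- the integrand ‖u x‖^2 - c is not integrable, so the integral is 0 and G u = 0
      exfalso
      have hni : ¬ Integrable (fun x : EuclideanSpace ℝ (Fin N) => ‖u x‖ ^ 2 - c) := by
        intro hI
        have hconst : Integrable (fun _ : EuclideanSpace ℝ (Fin N) => c) := by
          have e : (fun _ : EuclideanSpace ℝ (Fin N) => c) = fun x => ‖u x‖ ^ 2 - (‖u x‖ ^ 2 - c) := by
            funext x
            ring
          rw [e]
          exact hInt.sub hI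
        rcases integrable_const_iff.mp hconst with h | h
        · exact hc h
        · have := h.measure_univ_lt_top; rw [hvol] at this; exact (lt_irrefl _ this).elim
      have hG : G u = 0 := by
        rw [integral_undef hni] at hNeh
        linarith
      -- choose a large α to contradict the log-Sobolev inequality
      set T : ℝ := Real.log M - c / M + 1 - N - Real.log K with hT
      have h := hLS u (Real.exp ((s / N) * T)) (Real.exp_pos _) hInt
      rw [hsplit, hG, mul_zero, Real.log_exp] at h
      have hNs : (N:ℝ) / s * (s / N * T) = T := by
        field_simp
      rw [hNs, hT] at h
      have hcM : c / M * M = c := div_mul_cancel₀ c hM.ne'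
      nlinarith [h, hM, hcM]
  refine ⟨main, ?_⟩
  have hsInf : ENNReal.ofReal (K * Real.pi ^ ((N : ℝ) / 2) * Real.exp (ω + N)) ≤
      sInf {m : ENNReal | ∃ u : EuclideanSpace ℝ (Fin N) → ℂ,
        Integrable (fun x => ‖u x‖ ^ 2) ∧
        Integrable (fun x => ‖u x‖ ^ 2 * Real.log (‖u x‖ ^ 2)) ∧
        0 < ∫ x, ‖u x‖ ^ 2 ∧
        G u + ω * ∫ x, ‖u x‖ ^ 2 - ∫ x, ‖u x‖ ^ 2 * Real.log (‖u x‖ ^ 2) = 0 ∧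
        m = ENNReal.ofReal (∫ x, ‖u x‖ ^ 2)} := by
    apply le_sInf
    rintro m ⟨u, h1, h2, h3, h4, rfl⟩
    exact ENNReal.ofReal_le_ofReal (main u h1 h2 h3 h4)
  calc ENNReal.ofReal ((1/2) * (K * Real.pi ^ ((N : ℝ) / 2) * Real.exp (ω + N)))
      = ENNReal.ofReal (1/2) *
        ENNReal.ofReal (K * Real.pi ^ ((N : ℝ) / 2) * Real.exp (ω + N)) :=
        ENNReal.ofReal_mul (by norm_num)
    _ ≤ (1/2) * _ := by
        apply mul_le_mul' _ hsInf
        rw [ENNReal.ofReal_div_of_pos (by norm_num), ENNReal.ofReal_one,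
          ENNReal.ofReal_ofNat]
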